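/- Let Γ₁ be the standard set construction: given an increasing sequence a_k in Γ (a DCC set) and projections f(γ) := min{β ∈ Γ'' : β ≥ γ}, g(γ) := max{β ∈ Γ_k : β ≤ f(γ)} where Γ_k is the slice of closure(Γ) in ((k)/N, (k+1)/N], the image Γ' := {g(γ) : γ ∈ Γ} is a finite set. -/

import Mathlib

/-- A set of reals satisfies the descending chain condition if every non-increasing
sequence in it stabilizes. -/
def IsDCC (S : Set ℝ) : Prop :=
  ∀ f : ℕ → ℝ, (∀ n, f n ∈ S) → Antitone f → ∃ N, ∀ n, N ≤ n → f n = f N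

/-- A set of reals satisfies the ascending chain condition if every non-decreasing
sequence in it stabilizes. -/
def IsACC (S : Set ℝ) : Prop :=
  ∀ f : ℕ → ℝ, (∀ n, f n ∈ S) → Monotone f → ∃ N, ∀ n, N ≤ n → f n = f N

/-- Claim in the proof of Lemma 4.8: `Γ ⊆ [0, M]` a closed DCC set, `Γ''` a closed ACC set
dominating `Γ` (every `γ ∈ Γ` satisfies `γ ≤ β` for some `β ∈ Γ''`), `N` a positive
integer; slice `Γ` by `Γ₀ = Γ ∩ [0, 1/N]`, `Γ_k = Γ ∩ (k/N, (k+1)/N]` for `k ≥ 1`;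
set `f(γ) := min{β ∈ Γ'' : β ≥ γ}` and, for `γ ∈ Γ_k`,
`g(γ) := max{β ∈ Γ_k : β ≤ f(γ)}`.  Then the image `Γ' := {g(γ) : γ ∈ Γ}` is finite. -/
theorem stmt_17 (M : ℝ) (hM : 1 ≤ M) (Γ Γ'' : Set ℝ)
    (hΓsub : Γ ⊆ Set.Icc 0 M) (hΓcl : IsClosed Γ) (hdcc : IsDCC Γ)
    (hΓ''cl : IsClosed Γ'') (hacc : IsACC Γ'')
    (hdom : ∀ γ ∈ Γ, ∃ β ∈ Γ'', γ ≤ β)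
    (N : ℕ) (hN : 0 < N)
    (slice : ℕ → Set ℝ)
    (hslice0 : slice 0 = Γ ∩ Set.Icc 0 (1 / (N : ℝ)))
    (hslicek : ∀ k : ℕ,
      slice (k + 1) = Γ ∩ Set.Ioc (((k : ℝ) + 1) / N) (((k : ℝ) + 2) / N))
    (f g : ℝ → ℝ)
    (hf : ∀ γ ∈ Γ, f γ = sInf {β | β ∈ Γ'' ∧ γ ≤ β})
    (hg : ∀ γ ∈ Γ, ∀ k : ℕ, γ ∈ slice k → g γ = sSup {β | β ∈ slice k ∧ β ≤ f γ}) :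
    (g '' Γ).Finite := by
  have hNpos : (0:ℝ) < N := by exact_mod_cast hN
  -- facts about f
  have hfmem : ∀ γ ∈ Γ, f γ ∈ Γ'' ∧ γ ≤ f γ := by
    intro γ hγ
    have hset : {β | β ∈ Γ'' ∧ γ ≤ β} = Γ'' ∩ Set.Ici γ := by
      ext β; simp [Set.mem_Ici]
    have hne : {β | β ∈ Γ'' ∧ γ ≤ β}.Nonempty := by
      obtain ⟨β, hβ, hle⟩ := hdom γ hγ; exact ⟨β, hβ, hle⟩
    have hbdd : BddBelow {β | β ∈ Γ'' ∧ γ ≤ β} := ⟨γ, fun β hβ => hβ.2⟩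
    have hcl : IsClosed {β | β ∈ Γ'' ∧ γ ≤ β} := by
      rw [hset]; exact hΓ''cl.inter isClosed_Ici
    have := hcl.csInf_mem hne hbdd
    rw [hf γ hγ]; exact this
  have hfmono : ∀ γ ∈ Γ, ∀ γ' ∈ Γ, γ ≤ γ' → f γ ≤ f γ' := by
    intro γ hγ γ' hγ' hle
    rw [hf γ hγ, hf γ' hγ']
    refine csInf_le_csInf ⟨γ, fun β hβ => hβ.2⟩ ?_ ?_
    · obtain ⟨β, hβ, h⟩ := hdom γ' hγ'; exact ⟨β, hβ, h⟩
    · exact fun β hβ => ⟨hβ.1, hle.trans hβ.2⟩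
  -- facts about slices
  have hslice_sub : ∀ k, slice k ⊆ Γ := by
    intro k
    cases k with
    | zero => rw [hslice0]; exact Set.inter_subset_left
    | succ k => rw [hslicek]; exact Set.inter_subset_left
  have hkey : ∀ k (T : Set ℝ), T ⊆ slice k → T.Nonempty → BddAbove T → sSup T ∈ slice k := by
    intro k T hsub hne hbdd
    have hclm := csSup_mem_closure hne hbdd
    cases k with
    | zero =>
      have : closure T ⊆ slice 0 := by
        rw [hslice0] at hsub ⊢
        exact closure_minimal hsub (hΓcl.inter isClosed_Icc)
      exact this hclm
    | succ k =>
      rw [hslicek] at hsub ⊢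
      have hsub' : closure T ⊆ Γ ∩ Set.Icc (((k:ℝ)+1)/N) (((k:ℝ)+2)/N) :=
        closure_minimal (hsub.trans
          (Set.inter_subset_inter_right _ Set.Ioc_subset_Icc_self))
          (hΓcl.inter isClosed_Icc)
      obtain ⟨hΓm, _, h2⟩ := hsub' hclm
      obtain ⟨t, ht⟩ := hne
      exact ⟨hΓm, lt_of_lt_of_le (hsub ht).2.1 (le_csSup hbdd ht), h2⟩
  -- every element of Γ lies in some slice with bounded index
  set B := Nat.ceil (M * N) with hB
  have hmem : ∀ γ ∈ Γ, ∃ k ≤ B, γ ∈ slice k := by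
    intro γ hγ
    obtain ⟨h0, hMle⟩ := hΓsub hγ
    by_cases hle : γ ≤ 1 / N
    · exact ⟨0, Nat.zero_le _, by rw [hslice0]; exact ⟨hγ, h0, hle⟩⟩
    · push_neg at hle
      have h1 : 1 < γ * N := by
        rw [div_lt_iff₀ hNpos] at hle; linarith
      set m := Nat.ceil (γ * N) with hm
      have hm2 : 2 ≤ m := by
        have : (1:ℕ) < m := Nat.lt_ceil.mpr (by exact_mod_cast h1)
        omega
      have hmB : m ≤ B := Nat.ceil_le_ceil (mul_le_mul_of_nonneg_right hMle hNpos.le)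
      refine ⟨m - 1, le_trans (Nat.sub_le _ _) hmB, ?_⟩
      rw [show m - 1 = (m - 2) + 1 from by omega, hslicek]
      have hcast : ((m - 2 : ℕ) : ℝ) = (m:ℝ) - 2 := by
        push_cast [Nat.cast_sub hm2]; ring
      rw [hcast]
      refine ⟨hγ, ?_, ?_⟩
      · rw [div_lt_iff₀ hNpos]
        have := Nat.ceil_lt_add_one (show (0:ℝ) ≤ γ * N by positivity)
        rw [← hm] at this
        linarith
      · rw [le_div_iff₀ hNpos]
        have := Nat.le_ceil (γ * N)
        rw [← hm] at this
        linarith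
  -- facts about g
  have hgfact : ∀ γ ∈ Γ, ∀ k, γ ∈ slice k →
      g γ ∈ slice k ∧ γ ≤ g γ ∧ g γ ≤ f γ := by
    intro γ hγ k hγk
    have hfγ := hfmem γ hγ
    have hsub : {β | β ∈ slice k ∧ β ≤ f γ} ⊆ slice k := fun β hβ => hβ.1
    have hmemT : γ ∈ {β | β ∈ slice k ∧ β ≤ f γ} := ⟨hγk, hfγ.2⟩
    have hbdd : BddAbove {β | β ∈ slice k ∧ β ≤ f γ} := ⟨f γ, fun β hβ => hβ.2⟩
    have hsupmem := hkey k _ hsub ⟨γ, hmemT⟩ hbdd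
    rw [hg γ hγ k hγk]
    exact ⟨hsupmem, le_csSup hbdd hmemT, csSup_le ⟨γ, hmemT⟩ fun β hβ => hβ.2⟩
  -- g is idempotent and f ∘ g = f
  have hfix : ∀ γ ∈ Γ, ∀ k, γ ∈ slice k → g (g γ) = g γ := by
    intro γ hγ k hγk
    obtain ⟨hx_slice, hγx, hxf⟩ := hgfact γ hγ k hγk
    have hxΓ : g γ ∈ Γ := hslice_sub k hx_slice
    have hffix : f (g γ) = f γ := by
      apply le_antisymm
      · rw [hf _ hxΓ]
        exact csInf_le ⟨g γ, fun β hβ => hβ.2⟩ ⟨(hfmem γ hγ).1, hxf⟩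
      · exact hfmono γ hγ _ hxΓ hγx
    rw [hg _ hxΓ k hx_slice, hffix, ← hg γ hγ k hγk]
  -- main argument
  by_contra hfin
  replace hfin : (g '' Γ).Infinite := hfin
  have hΓ'sub : g '' Γ ⊆ Γ := by
    rintro x ⟨γ, hγ, rfl⟩
    obtain ⟨k, _, hγk⟩ := hmem γ hγ
    exact hslice_sub k (hgfact γ hγ k hγk).1
  have hwf : Γ.IsWF := by
    rw [Set.isWF_iff_no_descending_seq]
    intro u hu hmem'
    obtain ⟨n₀, hn₀⟩ := hdcc u (fun n => hmem' n) hu.antitone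
    exact absurd (hn₀ (n₀+1) (Nat.le_succ _)) (ne_of_lt (hu (Nat.lt_succ_self n₀)))
  have hpwo : (g '' Γ).IsPWO := (hwf.mono hΓ'sub).isPWO
  -- extract a strictly increasing sequence in g '' Γ
  let e := Set.Infinite.natEmbedding _ hfin
  let v : ℕ → ℝ := fun n => (e n : ℝ)
  have hvmem : ∀ n, v n ∈ g '' Γ := fun n => (e n).2
  have hvinj : Function.Injective v :=
    fun a b h => e.injective (Subtype.val_injective h)
  obtain ⟨φ, hφ⟩ := hpwo.exists_monotone_subseq (f := v) hvmem
  set x : ℕ → ℝ := fun n => v (φ n) with hx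
  have hxmem : ∀ n, x n ∈ g '' Γ := fun n => hvmem (φ n)
  have hxsm : StrictMono x :=
    Monotone.strictMono_of_injective (fun a b h => hφ h)
      (hvinj.comp φ.injective)
  -- pigeonhole into slices
  have hchoice : ∀ n, ∃ k ≤ B, x n ∈ slice k := fun n => hmem (x n) (hΓ'sub (hxmem n))
  choose K hKle hKmem using hchoice
  obtain ⟨k, hk⟩ := Finite.exists_infinite_fiber (fun n => (⟨K n, Nat.lt_succ_of_le (hKle n)⟩ : Fin (B+1)))
  have hks : {n | K n = (k : ℕ)}.Infinite := by
    have := Set.infinite_coe_iff.mp hk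
    refine this.mono ?_
    intro n hn
    simp only [Set.mem_preimage, Set.mem_singleton_iff] at hn
    simpa using congrArg Fin.val hn
  set y : ℕ → ℝ := fun j => x (Nat.nth (fun n => K n = (k : ℕ)) j) with hy
  have hysm : StrictMono y := hxsm.comp (Nat.nth_strictMono hks)
  have hymem : ∀ j, y j ∈ g '' Γ := fun j => hxmem _
  have hyslice : ∀ j, y j ∈ slice (k : ℕ) := by
    intro j
    have hp := Nat.nth_mem_of_infinite hks j
    have := hKmem (Nat.nth (fun n => K n = (k : ℕ)) j)
    rwa [hp] at this
  -- f ∘ y is monotone in Γ'', so stabilizes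
  have hfymono : Monotone (fun j => f (y j)) := fun a b h =>
    hfmono _ (hΓ'sub (hymem a)) _ (hΓ'sub (hymem b)) (hysm.monotone h)
  obtain ⟨n₀, hn₀⟩ := hacc (fun j => f (y j))
    (fun j => (hfmem _ (hΓ'sub (hymem j))).1) hfymono
  have hfeq : f (y (n₀+1)) = f (y n₀) := hn₀ (n₀+1) (Nat.le_succ _)
  -- each y j is a fixed point of g
  have hfixy : ∀ j, g (y j) = y j := by
    intro j
    obtain ⟨γ, hγ, hgγ⟩ := hymem j
    obtain ⟨k', _, hγk'⟩ := hmem γ hγ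
    rw [← hgγ]; exact hfix γ hγ k' hγk'
  have h1 : y n₀ = sSup {β | β ∈ slice (k:ℕ) ∧ β ≤ f (y n₀)} := by
    rw [← hg (y n₀) (hΓ'sub (hymem n₀)) (k:ℕ) (hyslice n₀)]
    exact (hfixy n₀).symm
  have h2 : y (n₀+1) = sSup {β | β ∈ slice (k:ℕ) ∧ β ≤ f (y n₀)} := by
    rw [← hfeq, ← hg (y (n₀+1)) (hΓ'sub (hymem (n₀+1))) (k:ℕ) (hyslice (n₀+1))]
    exact (hfixy (n₀+1)).symm
  exact absurd (h1.trans h2.symm) (ne_of_lt (hysm (Nat.lt_succ_self n₀)))
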